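/- Let H be a bounded self-adjoint operator on a complex Hilbert space 𝓗, ψ a unit vector, λ ∈ ℝ, and let ΔE = ΔE(H,ψ,λ) := inf{ε ∈ (0,∞) : 2ε·Im⟨ψ, (H − λ − iε)⁻¹ ψ⟩ ≥ 1}. If ΔE > 0, then 𝒯(H,ψ) ≥ 1/ΔE. -/

import Mathlib

open MeasureTheory Complex
open scoped ENNReal

variable {𝓗 : Type*} [NormedAddCommGroup 𝓗] [InnerProductSpace ℂ 𝓗] [CompleteSpace 𝓗]

/-- The unitary group `e^{-iHt}` generated by a bounded operator `H`,
defined via the exponential series. -/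
noncomputable def timeEvolution (H : 𝓗 →L[ℂ] 𝓗) (t : ℝ) : 𝓗 →L[ℂ] 𝓗 :=
  NormedSpace.exp ((-(Complex.I * (t : ℂ))) • H)

/-- The sojourn time `𝒯(H,ψ) = ∫_ℝ |⟨ψ, e^{-iHt}ψ⟩|² dt ∈ [0,∞]`. -/
noncomputable def sojournTime (H : 𝓗 →L[ℂ] 𝓗) (ψ : 𝓗) : ℝ≥0∞ :=
  ∫⁻ t : ℝ, ENNReal.ofReal (‖(inner ℂ ψ (timeEvolution H t ψ) : ℂ)‖ ^ 2)

/-- The resolvent `R(z) = (H - z)⁻¹` (via `Ring.inverse`; for self-adjoint `H`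
and `Im z ≠ 0` the operator `H - z` is invertible and this is its genuine inverse). -/
noncomputable def resolventOp (H : 𝓗 →L[ℂ] 𝓗) (z : ℂ) : 𝓗 →L[ℂ] 𝓗 :=
  Ring.inverse (H - z • 1)

/-- Lavine's energy width `ΔE(H,ψ,λ) = inf{ε ∈ (0,∞) : 2ε·Im⟨ψ, (H−λ−iε)⁻¹ψ⟩ ≥ 1}`. -/
noncomputable def energyWidth (H : 𝓗 →L[ℂ] 𝓗) (ψ : 𝓗) (lam : ℝ) : ℝ :=
  sInf {ε : ℝ | 0 < ε ∧
    1 ≤ 2 * ε * (inner ℂ ψ (resolventOp H ((lam : ℂ) + (ε : ℂ) * Complex.I) ψ) : ℂ).im}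



open Set

theorem te_unitary (H : 𝓗 →L[ℂ] 𝓗) (hH : IsSelfAdjoint H) (t : ℝ) :
    timeEvolution H t ∈ unitary (𝓗 →L[ℂ] 𝓗) := by
  letI : NormedAlgebra ℚ (𝓗 →L[ℂ] 𝓗) := NormedAlgebra.restrictScalars ℚ ℂ _
  apply NormedSpace.exp_mem_unitary_of_mem_skewAdjoint
  rw [skewAdjoint.mem_iff, star_smul, hH.star_eq, ← neg_smul]
  congr 1
  simp only [star_neg, star_mul', Complex.star_def, Complex.conj_I, Complex.conj_ofReal]
  ring

theorem te_norm (H : 𝓗 →L[ℂ] 𝓗) (hH : IsSelfAdjoint H) (t : ℝ) (ψ : 𝓗) :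
    ‖timeEvolution H t ψ‖ = ‖ψ‖ := by
  have h := te_unitary H hH t
  have h1 : (star (timeEvolution H t)) * timeEvolution H t = 1 := (Unitary.mem_iff.mp h).1
  have h2 : (inner ℂ (timeEvolution H t ψ) (timeEvolution H t ψ) : ℂ) = inner ℂ ψ ψ := by
    rw [← ContinuousLinearMap.adjoint_inner_right]
    have : (ContinuousLinearMap.adjoint (timeEvolution H t)) (timeEvolution H t ψ)
        = ((star (timeEvolution H t)) * timeEvolution H t) ψ := rfl
    rw [this, h1]; rfl
  have h3 : ‖timeEvolution H t ψ‖^2 = ‖ψ‖^2 := by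
    rw [← @inner_self_eq_norm_sq ℂ, ← @inner_self_eq_norm_sq ℂ, h2]
  nlinarith [norm_nonneg (timeEvolution H t ψ), norm_nonneg ψ]

theorem te_eq (H : 𝓗 →L[ℂ] 𝓗) (s : ℝ) :
    timeEvolution H s = NormedSpace.exp (s • ((-Complex.I) • H)) := by
  rw [timeEvolution]
  congr 1
  ext x
  simp only [ContinuousLinearMap.smul_apply, ContinuousLinearMap.coe_smul',
    Pi.smul_apply]
  rw [← Complex.coe_smul, smul_smul]
  congr 1
  ring

theorem te_hasDerivAt (H : 𝓗 →L[ℂ] 𝓗) (ψ : 𝓗) (t : ℝ) :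
    HasDerivAt (fun s : ℝ => timeEvolution H s ψ)
      (timeEvolution H t (((-Complex.I) • H) ψ)) t := by
  have h1 : HasDerivAt (fun s : ℝ => NormedSpace.exp (s • ((-Complex.I) • H)))
      (NormedSpace.exp (t • ((-Complex.I) • H)) * ((-Complex.I) • H)) t :=
    hasDerivAt_exp_smul_const _ t
  have h2 := ((ContinuousLinearMap.apply ℂ 𝓗 ψ).restrictScalars ℝ).hasFDerivAt.comp_hasDerivAt t h1
  simp only [ContinuousLinearMap.coe_restrictScalars', ContinuousLinearMap.apply_apply,
    Function.comp, ContinuousLinearMap.mul_apply] at h2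
  have h3 : (fun s : ℝ => timeEvolution H s ψ)
      = fun s : ℝ => NormedSpace.exp (s • ((-Complex.I) • H)) ψ := by
    funext s; rw [te_eq]
  rw [h3, te_eq]
  exact h2

theorem te_cont (H : 𝓗 →L[ℂ] 𝓗) (ψ : 𝓗) :
    Continuous (fun t : ℝ => timeEvolution H t ψ) :=
  continuous_iff_continuousAt.2 fun t => (te_hasDerivAt H ψ t).continuousAt

theorem cexp_deriv (z : ℂ) (t : ℝ) :
    HasDerivAt (fun s : ℝ => Complex.exp (Complex.I * z * s))
      (Complex.I * z * Complex.exp (Complex.I * z * t)) t := by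
  have h : HasDerivAt (fun w : ℂ => Complex.exp (Complex.I * z * w))
      (Complex.exp (Complex.I * z * t) * (Complex.I * z * 1)) (t : ℂ) := by
    simpa using ((hasDerivAt_id (t : ℂ)).const_mul (Complex.I * z)).cexp
  have := h.comp_ofReal
  convert this using 1
  ring

-- norm of the coefficient
theorem norm_coef (lam ε : ℝ) (t : ℝ) :
    ‖Complex.exp (Complex.I * ((lam : ℂ) + (ε : ℂ) * Complex.I) * t)‖ = Real.exp (-ε * t) := by
  rw [Complex.norm_exp]
  congr 1
  simp [Complex.add_re, Complex.mul_re, Complex.mul_im]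

theorem resolvent_repr (H : 𝓗 →L[ℂ] 𝓗) (hH : IsSelfAdjoint H) (ψ : 𝓗) (hψ : ‖ψ‖ = 1)
    (lam ε : ℝ) (hε : 0 < ε) :
    resolventOp H ((lam : ℂ) + (ε : ℂ) * Complex.I) ψ
      = ∫ t in Ioi (0:ℝ), (Complex.I * Complex.exp (Complex.I * ((lam : ℂ) + (ε : ℂ) * Complex.I) * t)) • timeEvolution H t ψ := by
  set z := (lam : ℂ) + (ε : ℂ) * Complex.I with hz
  set B := H - z • (1 : 𝓗 →L[ℂ] 𝓗) with hB
  -- B is a unit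
  have hzim : z.im ≠ 0 := by simp [hz]; positivity
  have hBunit : IsUnit B := by
    have hz' : z ∉ spectrum ℂ H := fun hmem => by
      have := hH.mem_spectrum_eq_re hmem
      exact hzim (by rw [this]; simp)
    rw [spectrum.notMem_iff, Algebra.algebraMap_eq_smul_one] at hz'
    simpa [hB] using hz'.neg
  -- integrability of the integrand for any vector φ
  have hint : ∀ φ : 𝓗, IntegrableOn
      (fun t : ℝ => (Complex.I * Complex.exp (Complex.I * z * t)) • timeEvolution H t φ)
      (Ioi (0:ℝ)) := by
    intro φ
    apply Integrable.mono' ((exp_neg_integrableOn_Ioi 0 hε).smul_const ‖φ‖)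
    · exact ((continuous_const.mul
        (continuous_const.mul Complex.continuous_ofReal).cexp).smul
        (te_cont H φ)).aestronglyMeasurable.restrict
    · filter_upwards with t
      rw [norm_smul, norm_mul, te_norm H hH, Complex.norm_I, one_mul, norm_coef]
      simp
  -- the primitive
  set F : ℝ → 𝓗 := fun t => (-Complex.exp (Complex.I * z * t)) • timeEvolution H t ψ with hF
  have hderiv : ∀ t ∈ Ici (0:ℝ), HasDerivAt F
      ((Complex.I * Complex.exp (Complex.I * z * t)) • timeEvolution H t (B ψ)) t := by
    intro t _
    have h1 : HasDerivAt (fun s : ℝ => -Complex.exp (Complex.I * z * s))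
        (-(Complex.I * z * Complex.exp (Complex.I * z * t))) t := (cexp_deriv z t).neg
    have h2 := te_hasDerivAt H ψ t
    have := h1.smul h2
    convert this using 1
    · rfl
    have hU : timeEvolution H t (B ψ)
        = timeEvolution H t (H ψ) - z • timeEvolution H t ψ := by
      rw [hB]; simp only [ContinuousLinearMap.sub_apply, ContinuousLinearMap.smul_apply,
        ContinuousLinearMap.one_apply, map_sub, _root_.map_smul]
    have hU2 : timeEvolution H t (((-Complex.I) • H) ψ)
        = (-Complex.I) • timeEvolution H t (H ψ) := by
      simp only [ContinuousLinearMap.smul_apply, _root_.map_smul]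
    rw [hU, hU2]
    match_scalars <;> ring
  have htend : Filter.Tendsto F Filter.atTop (nhds 0) := by
    apply squeeze_zero_norm (a := fun t => Real.exp (-ε * t))
    · intro t
      rw [hF, norm_smul, norm_neg, te_norm H hH, hψ, mul_one, norm_coef]
    · exact Real.tendsto_exp_atBot.comp
        ((Filter.tendsto_const_mul_atBot_of_neg (by linarith : -ε < 0)).mpr Filter.tendsto_id)
  have key : (∫ t in Ioi (0:ℝ),
      (Complex.I * Complex.exp (Complex.I * z * t)) • timeEvolution H t (B ψ)) = 0 - F 0 :=
    integral_Ioi_of_hasDerivAt_of_tendsto' hderiv (hint (B ψ)) htend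
  have hF0 : F 0 = -ψ := by
    have h0 : (-(Complex.I * ((0:ℝ):ℂ))) • H = 0 := by norm_num
    simp [hF, timeEvolution, h0, NormedSpace.exp_zero]
  rw [hF0, zero_sub, neg_neg] at key
  -- commutation
  have hc : ∀ t : ℝ, B * timeEvolution H t = timeEvolution H t * B := by
    intro t
    have h1 : Commute B H := ((Commute.refl H).sub_left (((Commute.one_left H).smul_left z)))
    have h2 : Commute B ((-(Complex.I * (t:ℂ))) • H) := h1.smul_right _
    exact (h2.exp_right)
  have hBswap : ∀ t : ℝ, B (timeEvolution H t ψ) = timeEvolution H t (B ψ) := by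
    intro t
    calc B (timeEvolution H t ψ) = (B * timeEvolution H t) ψ := rfl
    _ = (timeEvolution H t * B) ψ := by rw [hc]
    _ = timeEvolution H t (B ψ) := rfl
  -- B v = ψ
  set v := ∫ t in Ioi (0:ℝ),
      (Complex.I * Complex.exp (Complex.I * z * t)) • timeEvolution H t ψ with hv
  have hBv : B v = ψ := by
    rw [hv, ← ContinuousLinearMap.integral_comp_comm B (hint ψ)]
    have heq : ∫ t in Ioi (0:ℝ), B ((Complex.I * Complex.exp (Complex.I * z * t)) • timeEvolution H t ψ)
        = ∫ t in Ioi (0:ℝ), (Complex.I * Complex.exp (Complex.I * z * t)) • timeEvolution H t (B ψ) := by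
      apply setIntegral_congr_fun measurableSet_Ioi
      intro t _
      simp only
      rw [_root_.map_smul, hBswap]
    rw [heq]
    exact key
  have hfin : resolventOp H z (B v) = v := by
    rw [resolventOp]
    calc Ring.inverse (H - z • 1) (B _)
        = (Ring.inverse (H - z • 1) * B) _ := rfl
      _ = (1 : 𝓗 →L[ℂ] 𝓗) _ := by rw [hB, Ring.inverse_mul_cancel _ (hB ▸ hBunit)]
      _ = _ := by rw [ContinuousLinearMap.one_apply]
  rw [hBv] at hfin
  exact hfin

theorem te_integrable (H : 𝓗 →L[ℂ] 𝓗) (hH : IsSelfAdjoint H) {ε : ℝ} (hε : 0 < ε)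
    (z : ℂ) (hzn : ∀ t : ℝ, ‖Complex.exp (Complex.I * z * t)‖ = Real.exp (-ε * t)) (φ : 𝓗) :
    IntegrableOn
      (fun t : ℝ => (Complex.I * Complex.exp (Complex.I * z * t)) • timeEvolution H t φ)
      (Ioi (0:ℝ)) := by
  apply Integrable.mono' ((exp_neg_integrableOn_Ioi 0 hε).smul_const ‖φ‖)
  · exact ((continuous_const.mul
      (continuous_const.mul Complex.continuous_ofReal).cexp).smul
      (te_cont H φ)).aestronglyMeasurable.restrict
  · filter_upwards with t
    rw [norm_smul, norm_mul, te_norm H hH, Complex.norm_I, one_mul, hzn]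
    simp

theorem im_inner_resolvent_le (H : 𝓗 →L[ℂ] 𝓗) (hH : IsSelfAdjoint H) (ψ : 𝓗) (hψ : ‖ψ‖ = 1)
    (lam ε : ℝ) (hε : 0 < ε) :
    (inner ℂ ψ (resolventOp H ((lam : ℂ) + (ε : ℂ) * Complex.I) ψ) : ℂ).im
      ≤ ∫ t in Ioi (0:ℝ), Real.exp (-ε * t) * ‖(inner ℂ ψ (timeEvolution H t ψ) : ℂ)‖ := by
  set z := (lam : ℂ) + (ε : ℂ) * Complex.I with hz
  have hzn := norm_coef lam ε
  have hint := te_integrable H hH hε z hzn ψ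
  rw [resolvent_repr H hH ψ hψ lam ε hε]
  have h1 : (inner ℂ ψ (∫ t in Ioi (0:ℝ),
      (Complex.I * Complex.exp (Complex.I * z * t)) • timeEvolution H t ψ) : ℂ)
      = ∫ t in Ioi (0:ℝ), (Complex.I * Complex.exp (Complex.I * z * t))
          * (inner ℂ ψ (timeEvolution H t ψ) : ℂ) := by
    calc (inner ℂ ψ (∫ t in Ioi (0:ℝ),
        (Complex.I * Complex.exp (Complex.I * z * t)) • timeEvolution H t ψ) : ℂ)
        = (innerSL ℂ ψ) (∫ t in Ioi (0:ℝ),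
            (Complex.I * Complex.exp (Complex.I * z * t)) • timeEvolution H t ψ) := rfl
      _ = ∫ t in Ioi (0:ℝ), (innerSL ℂ ψ)
            ((Complex.I * Complex.exp (Complex.I * z * t)) • timeEvolution H t ψ) :=
          (ContinuousLinearMap.integral_comp_comm _ hint).symm
      _ = _ := by simp [inner_smul_right]
  rw [h1]
  have hintc : Integrable (fun t : ℝ => (Complex.I * Complex.exp (Complex.I * z * t))
      * (inner ℂ ψ (timeEvolution H t ψ) : ℂ)) (volume.restrict (Ioi (0:ℝ))) := by
    have := (innerSL ℂ ψ).integrable_comp hint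
    simpa [inner_smul_right] using this
  have h2 : (∫ t in Ioi (0:ℝ), Complex.I * Complex.exp (Complex.I * z * t)
      * (inner ℂ ψ (timeEvolution H t ψ) : ℂ)).im
      = ∫ t in Ioi (0:ℝ), (Complex.I * Complex.exp (Complex.I * z * t)
          * (inner ℂ ψ (timeEvolution H t ψ) : ℂ)).im := by
    have := ContinuousLinearMap.integral_comp_comm Complex.imCLM hintc
    simpa using this.symm
  rw [h2]
  apply integral_mono hintc.im
  · apply Integrable.mono' (exp_neg_integrableOn_Ioi 0 hε)
    · exact ((Real.continuous_exp.comp (continuous_const.mul continuous_id)).mul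
        ((continuous_const.inner (te_cont H ψ)).norm)).aestronglyMeasurable.restrict
    · filter_upwards with t
      rw [Real.norm_eq_abs, _root_.abs_of_nonneg (by positivity)]
      calc Real.exp (-ε * t) * ‖(inner ℂ ψ (timeEvolution H t ψ) : ℂ)‖
          ≤ Real.exp (-ε * t) * (‖ψ‖ * ‖timeEvolution H t ψ‖) :=
            mul_le_mul_of_nonneg_left (norm_inner_le_norm _ _) (Real.exp_nonneg _)
        _ = Real.exp (-ε * t) := by rw [te_norm H hH, hψ]; ring
  · intro t
    calc ((Complex.I * Complex.exp (Complex.I * z * t))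
          * (inner ℂ ψ (timeEvolution H t ψ) : ℂ)).im
        ≤ ‖(Complex.I * Complex.exp (Complex.I * z * t))
          * (inner ℂ ψ (timeEvolution H t ψ) : ℂ)‖ := by
          exact Complex.im_le_norm _
      _ = Real.exp (-ε * t) * ‖(inner ℂ ψ (timeEvolution H t ψ) : ℂ)‖ := by
          rw [norm_mul, norm_mul, Complex.norm_I, one_mul, hzn]

theorem te_neg (H : 𝓗 →L[ℂ] 𝓗) (hH : IsSelfAdjoint H) (t : ℝ) :
    timeEvolution H (-t) = star (timeEvolution H t) := by
  rw [timeEvolution, timeEvolution, NormedSpace.star_exp]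
  congr 1
  rw [star_smul, hH.star_eq]
  congr 1
  simp only [star_neg, star_mul', Complex.star_def, Complex.conj_I, Complex.conj_ofReal]
  push_cast
  ring

theorem f_neg (H : 𝓗 →L[ℂ] 𝓗) (hH : IsSelfAdjoint H) (ψ : 𝓗) (t : ℝ) :
    ‖(inner ℂ ψ (timeEvolution H (-t) ψ) : ℂ)‖ = ‖(inner ℂ ψ (timeEvolution H t ψ) : ℂ)‖ := by
  rw [te_neg H hH, ContinuousLinearMap.star_eq_adjoint, ContinuousLinearMap.adjoint_inner_right,
    ← inner_conj_symm]
  exact RCLike.norm_conj _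

theorem exp_integral_Ioi {b : ℝ} (hb : 0 < b) :
    ∫ t in Ioi (0:ℝ), Real.exp (-b * t) = 1 / b := by
  have hderiv : ∀ t ∈ Ici (0:ℝ), HasDerivAt (fun s : ℝ => -Real.exp (-b * s) / b)
      (Real.exp (-b * t)) t := by
    intro t _
    have h1 : HasDerivAt (fun s : ℝ => -b * s) (-b) t := by
      simpa using (hasDerivAt_id t).const_mul (-b)
    have := (h1.exp.neg.div_const b)
    exact this.congr_deriv (by field_simp [hb.ne'])
  have htend : Filter.Tendsto (fun s : ℝ => -Real.exp (-b * s) / b) Filter.atTop (nhds 0) := by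
    have : Filter.Tendsto (fun s : ℝ => Real.exp (-b * s)) Filter.atTop (nhds 0) :=
      Real.tendsto_exp_atBot.comp
        ((Filter.tendsto_const_mul_atBot_of_neg (by linarith : -b < 0)).mpr Filter.tendsto_id)
    simpa using (this.neg.div_const b)
  rw [integral_Ioi_of_hasDerivAt_of_tendsto' hderiv (exp_neg_integrableOn_Ioi 0 hb) htend]
  norm_num
  rw [neg_div, neg_neg, one_div]

theorem weighted_integrable (H : 𝓗 →L[ℂ] 𝓗) (hH : IsSelfAdjoint H) (ψ : 𝓗) (hψ : ‖ψ‖ = 1)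
    {ε : ℝ} (hε : 0 < ε) :
    IntegrableOn (fun t : ℝ => Real.exp (-ε * t) * ‖(inner ℂ ψ (timeEvolution H t ψ) : ℂ)‖)
      (Ioi (0:ℝ)) := by
  apply Integrable.mono' (exp_neg_integrableOn_Ioi 0 hε)
  · exact ((Real.continuous_exp.comp (continuous_const.mul continuous_id)).mul
      ((continuous_const.inner (te_cont H ψ)).norm)).aestronglyMeasurable.restrict
  · filter_upwards with t
    rw [Real.norm_eq_abs, _root_.abs_of_nonneg (by positivity)]
    calc Real.exp (-ε * t) * ‖(inner ℂ ψ (timeEvolution H t ψ) : ℂ)‖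
        ≤ Real.exp (-ε * t) * (‖ψ‖ * ‖timeEvolution H t ψ‖) :=
          mul_le_mul_of_nonneg_left (norm_inner_le_norm _ _) (Real.exp_nonneg _)
      _ = Real.exp (-ε * t) := by rw [te_norm H hH, hψ]; ring

theorem step (H : 𝓗 →L[ℂ] 𝓗) (hH : IsSelfAdjoint H) (ψ : 𝓗) (hψ : ‖ψ‖ = 1) (lam : ℝ)
    {ε : ℝ} (hε : 0 < ε)
    (hset : 1 ≤ 2 * ε * (inner ℂ ψ (resolventOp H ((lam : ℂ) + (ε : ℂ) * Complex.I) ψ) : ℂ).im) :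
    ENNReal.ofReal (1 / ε) ≤ sojournTime H ψ := by
  set f : ℝ → ℝ := fun t => ‖(inner ℂ ψ (timeEvolution H t ψ) : ℂ)‖ with hf
  have hfc : Continuous f := (continuous_const.inner (te_cont H ψ)).norm
  have hfnn : ∀ t, 0 ≤ f t := fun t => norm_nonneg _
  set L : ℝ≥0∞ := ∫⁻ t in Ioi (0:ℝ), ENNReal.ofReal (f t ^ 2) with hL
  -- reflection : 2 * L ≤ sojournTime
  have h2L : 2 * L ≤ sojournTime H ψ := by
    have gmeas : Measurable fun t : ℝ => ENNReal.ofReal (f t ^ 2) :=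
      ENNReal.measurable_ofReal.comp ((hfc.pow 2).measurable)
    have hsplit : sojournTime H ψ
        = (∫⁻ t in Iio (0:ℝ), ENNReal.ofReal (f t ^ 2))
          + ∫⁻ t in Ici (0:ℝ), ENNReal.ofReal (f t ^ 2) := by
      rw [sojournTime, ← lintegral_add_compl (fun t => ENNReal.ofReal (f t ^ 2))
        (measurableSet_Iio (a := (0:ℝ))), compl_Iio]
    have hIci : (∫⁻ t in Ici (0:ℝ), ENNReal.ofReal (f t ^ 2)) = L := by
      rw [hL]
      exact (setLIntegral_congr (Ioi_ae_eq_Ici (a := (0:ℝ)) (μ := volume))).symm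
    have hIio : (∫⁻ t in Iio (0:ℝ), ENNReal.ofReal (f t ^ 2)) = L := by
      have hemb : MeasurableEmbedding (fun t : ℝ => -t) :=
        (Homeomorph.neg ℝ).measurableEmbedding
      have hpre : (fun t : ℝ => -t) ⁻¹' (Iio (0:ℝ)) = Ioi (0:ℝ) := by
        ext x; simp
      have := (Measure.measurePreserving_neg (volume : Measure ℝ)).setLIntegral_comp_preimage_emb
        hemb (fun t => ENNReal.ofReal (f t ^ 2)) (Iio 0)
      rw [hpre] at this
      rw [← this, hL]
      apply setLIntegral_congr_fun measurableSet_Ioi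
      intro t _
      rw [hf]
      simp only
      rw [f_neg H hH]
    rw [hsplit, hIci, hIio, two_mul]
  -- the resolvent bound
  have hIm := im_inner_resolvent_le H hH ψ hψ lam ε hε
  set Iε : ℝ := ∫ t in Ioi (0:ℝ), Real.exp (-ε * t) * f t with hIε
  have h1 : (1:ℝ) ≤ 2 * ε * Iε := by
    refine le_trans hset ?_
    have := mul_le_mul_of_nonneg_left hIm (by positivity : (0:ℝ) ≤ 2 * ε)
    exact this
  -- pass to ℝ≥0∞
  have hIεnn : 0 ≤ Iε := by
    apply integral_nonneg
    intro t; positivity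
  have hofIε : ENNReal.ofReal Iε
      = ∫⁻ t in Ioi (0:ℝ), ENNReal.ofReal (Real.exp (-ε * t) * f t) := by
    rw [hIε]
    exact ofReal_integral_eq_lintegral_ofReal (weighted_integrable H hH ψ hψ hε)
      (Filter.Eventually.of_forall fun t => by positivity)
  -- Hölder
  have hpq : Real.HolderConjugate 2 2 := .two_two
  have hmeas1 : AEMeasurable (fun t : ℝ => ENNReal.ofReal (Real.exp (-ε * t)))
      (volume.restrict (Ioi (0:ℝ))) :=
    (ENNReal.measurable_ofReal.comp
      (Real.continuous_exp.comp (continuous_const.mul continuous_id)).measurable).aemeasurable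
  have hmeas2 : AEMeasurable (fun t : ℝ => ENNReal.ofReal (f t))
      (volume.restrict (Ioi (0:ℝ))) :=
    (ENNReal.measurable_ofReal.comp hfc.measurable).aemeasurable
  have hold := ENNReal.lintegral_mul_le_Lp_mul_Lq (volume.restrict (Ioi (0:ℝ))) hpq hmeas1 hmeas2
  simp only [Pi.mul_apply] at hold
  -- identify the three integrals
  have hid1 : (∫⁻ t in Ioi (0:ℝ), ENNReal.ofReal (Real.exp (-ε * t) * f t))
      = ∫⁻ t in Ioi (0:ℝ), ENNReal.ofReal (Real.exp (-ε * t)) * ENNReal.ofReal (f t) := by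
    congr 1; funext t; rw [ENNReal.ofReal_mul (Real.exp_nonneg _)]
  have hid2 : (∫⁻ t in Ioi (0:ℝ), ENNReal.ofReal (Real.exp (-ε * t)) ^ (2:ℝ))
      = ENNReal.ofReal (1 / (2 * ε)) := by
    have : ∀ t : ℝ, ENNReal.ofReal (Real.exp (-ε * t)) ^ (2:ℝ)
        = ENNReal.ofReal (Real.exp (-(2*ε) * t)) := by
      intro t
      rw [ENNReal.ofReal_rpow_of_nonneg (Real.exp_nonneg _) (by norm_num)]
      congr 1
      rw [← Real.exp_mul]
      congr 1; ring
    simp_rw [this]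
    rw [← ofReal_integral_eq_lintegral_ofReal (exp_neg_integrableOn_Ioi 0 (by positivity))
      (Filter.Eventually.of_forall fun t => Real.exp_nonneg _), exp_integral_Ioi (by positivity)]
  have hid3 : (∫⁻ t in Ioi (0:ℝ), ENNReal.ofReal (f t) ^ (2:ℝ)) = L := by
    rw [hL]; congr 1; funext t
    rw [ENNReal.ofReal_rpow_of_nonneg (hfnn t) (by norm_num)]
    congr 1
    rw [← Real.rpow_natCast (f t) 2]
    norm_num
  rw [hid2, hid3] at hold
  -- assemble
  set a : ℝ≥0∞ := ENNReal.ofReal (2 * ε) with ha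
  have ha0 : a ≠ 0 := by
    rw [ha]; simp [ENNReal.ofReal_eq_zero]; positivity
  have hatop : a ≠ ⊤ := ENNReal.ofReal_ne_top
  have hainv : ENNReal.ofReal (1 / (2 * ε)) = a⁻¹ := by
    rw [one_div, ha, ENNReal.ofReal_inv_of_pos (by positivity)]
  have hchain : (1:ℝ≥0∞) ≤ a * (a⁻¹ ^ (1/2:ℝ) * L ^ (1/2:ℝ)) := by
    calc (1:ℝ≥0∞) = ENNReal.ofReal 1 := by simp
      _ ≤ ENNReal.ofReal (2 * ε * Iε) := ENNReal.ofReal_le_ofReal h1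
      _ = a * ENNReal.ofReal Iε := by
          rw [ha, ← ENNReal.ofReal_mul (by positivity)]
      _ ≤ a * (a⁻¹ ^ (1/2:ℝ) * L ^ (1/2:ℝ)) := by
          apply mul_le_mul_right
          rw [hofIε, hid1, ← hainv]
          exact hold
  have hsq : (1:ℝ≥0∞) ≤ a * L := by
    have h2 : (1:ℝ≥0∞) = 1 ^ (2:ℝ) := by simp
    calc (1:ℝ≥0∞) = (1:ℝ≥0∞) ^ (2:ℝ) := by simp
      _ ≤ (a * (a⁻¹ ^ (1/2:ℝ) * L ^ (1/2:ℝ))) ^ (2:ℝ) :=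
          ENNReal.rpow_le_rpow hchain (by norm_num)
      _ = a ^ (2:ℝ) * (a⁻¹ * L) := by
          rw [ENNReal.mul_rpow_of_nonneg _ _ (by norm_num : (0:ℝ) ≤ 2),
            ENNReal.mul_rpow_of_nonneg _ _ (by norm_num : (0:ℝ) ≤ 2),
            ← ENNReal.rpow_mul, ← ENNReal.rpow_mul]
          norm_num
      _ = a * L := by
          rw [show (2:ℝ) = ((2:ℕ):ℝ) by norm_num, ENNReal.rpow_natCast, pow_two,
            mul_assoc, ← mul_assoc a a⁻¹, ENNReal.mul_inv_cancel ha0 hatop, one_mul]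
  -- from 1 ≤ a * L deduce the claim
  have haeq : a = ENNReal.ofReal ε * 2 := by
    rw [ha, mul_comm, ← ENNReal.ofReal_ofNat, ← ENNReal.ofReal_mul (le_of_lt hε)]
  have hfin : (1:ℝ≥0∞) ≤ ENNReal.ofReal ε * sojournTime H ψ := by
    calc (1:ℝ≥0∞) ≤ a * L := hsq
      _ = ENNReal.ofReal ε * (2 * L) := by rw [haeq]; ring
      _ ≤ ENNReal.ofReal ε * sojournTime H ψ := mul_le_mul_right h2L _
  have hepsinv : ENNReal.ofReal (1 / ε) = (ENNReal.ofReal ε)⁻¹ := by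
    rw [one_div, ENNReal.ofReal_inv_of_pos hε]
  rw [hepsinv]
  calc (ENNReal.ofReal ε)⁻¹ = (ENNReal.ofReal ε)⁻¹ * 1 := by rw [mul_one]
    _ ≤ (ENNReal.ofReal ε)⁻¹ * (ENNReal.ofReal ε * sojournTime H ψ) :=
        mul_le_mul_right hfin _
    _ = sojournTime H ψ := by
        rw [← mul_assoc, ENNReal.inv_mul_cancel (by simp [ENNReal.ofReal_eq_zero]; positivity)
          ENNReal.ofReal_ne_top, one_mul]

/-- If the energy width `ΔE(H,ψ,λ)` is positive, then
`𝒯(H,ψ) ≥ 1/ΔE(H,ψ,λ)`. -/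
theorem sojournTime_ge_inv_energyWidth (H : 𝓗 →L[ℂ] 𝓗) (hH : IsSelfAdjoint H)
    (ψ : 𝓗) (hψ : ‖ψ‖ = 1) (lam : ℝ) (h : 0 < energyWidth H ψ lam) :
    ENNReal.ofReal (1 / energyWidth H ψ lam) ≤ sojournTime H ψ := by
  set S := {ε : ℝ | 0 < ε ∧
    1 ≤ 2 * ε * (inner ℂ ψ (resolventOp H ((lam : ℂ) + (ε : ℂ) * Complex.I) ψ) : ℂ).im} with hS
  have hE : energyWidth H ψ lam = sInf S := rfl
  have hne : S.Nonempty := by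
    by_contra hc
    rw [Set.not_nonempty_iff_eq_empty] at hc
    rw [energyWidth, ← hS, hc, Real.sInf_empty] at h
    exact lt_irrefl 0 h
  set E := energyWidth H ψ lam with hEdef
  have hbound : ∀ δ : ℝ, 0 < δ → ENNReal.ofReal (1 / (E + δ)) ≤ sojournTime H ψ := by
    intro δ hδ
    obtain ⟨ε, hεS, hεlt⟩ := Real.lt_sInf_add_pos hne hδ
    refine le_trans ?_ (step H hH ψ hψ lam hεS.1 hεS.2)
    apply ENNReal.ofReal_le_ofReal
    rw [← hE] at hεlt
    exact one_div_le_one_div_of_le hεS.1 hεlt.le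
  have hcont : ContinuousAt (fun δ : ℝ => 1 / (E + δ)) 0 := by
    apply ContinuousAt.div continuousAt_const (continuousAt_const.add continuousAt_id)
    simpa using h.ne'
  have htends : Filter.Tendsto (fun δ : ℝ => ENNReal.ofReal (1 / (E + δ)))
      (nhdsWithin 0 (Ioi 0)) (nhds (ENNReal.ofReal (1 / E))) := by
    have h2 : Filter.Tendsto (fun δ : ℝ => 1 / (E + δ)) (nhdsWithin 0 (Ioi 0))
        (nhds (1 / E)) := by
      have := hcont.tendsto.mono_left (nhdsWithin_le_nhds (s := Ioi (0:ℝ)))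
      simpa using this
    exact (ENNReal.continuous_ofReal.tendsto _).comp h2
  exact le_of_tendsto htends
    (Filter.eventually_of_mem self_mem_nhdsWithin fun δ hδ => hbound δ hδ)
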